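/- Let X ∈ ℝ^{D×P} and U ∈ ℝ^{D×D} orthonormal. If β* minimizes ‖β‖_{1,2} subject to I_D = Xβ, then β*U⁻¹ minimizes ‖β‖_{1,2} subject to I_D = (UX)β; consequently the set of rows with nonzero norm (the support) of the minimizers is the same for X and UX. -/
import Mathlib

open Matrix

noncomputable def rowNorm {P D : ℕ} (β : Matrix (Fin P) (Fin D) ℝ) (p : Fin P) : ℝ :=
  Real.sqrt (∑ j, (β p j) ^ 2)

noncomputable def norm12 {P D : ℕ} (β : Matrix (Fin P) (Fin D) ℝ) : ℝ :=
  ∑ p, rowNorm β p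

def support {P D : ℕ} (β : Matrix (Fin P) (Fin D) ℝ) : Set (Fin P) :=
  {p | 0 < rowNorm β p}

lemma rowNorm_mul_orth {P D : ℕ} (β : Matrix (Fin P) (Fin D) ℝ)
    (V : Matrix (Fin D) (Fin D) ℝ) (hV : V * Vᵀ = 1) (p : Fin P) :
    rowNorm (β * V) p = rowNorm β p := by
  have hVe : ∀ k l, ∑ j, V k j * V l j = if k = l then 1 else 0 := by
    intro k l
    have := congrFun (congrFun hV k) l
    simpa [Matrix.mul_apply, Matrix.transpose_apply, Matrix.one_apply] using this
  unfold rowNorm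
  congr 1
  simp only [Matrix.mul_apply]
  calc ∑ j, (∑ k, β p k * V k j) ^ 2
      = ∑ j, ∑ k, ∑ l, β p k * β p l * (V k j * V l j) := by
        refine Finset.sum_congr rfl fun j _ => ?_
        rw [sq, Finset.sum_mul_sum]
        exact Finset.sum_congr rfl fun k _ => Finset.sum_congr rfl fun l _ => by ring
    _ = ∑ k, ∑ l, β p k * β p l * ∑ j, V k j * V l j := by
        rw [Finset.sum_comm]
        refine Finset.sum_congr rfl fun k _ => ?_
        rw [Finset.sum_comm]
        exact Finset.sum_congr rfl fun l _ => (Finset.mul_sum _ _ _).symm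
    _ = ∑ k, β p k ^ 2 := by
        refine Finset.sum_congr rfl fun k _ => ?_
        simp [hVe, mul_ite, sq]

lemma norm12_mul_orth {P D : ℕ} (β : Matrix (Fin P) (Fin D) ℝ)
    (V : Matrix (Fin D) (Fin D) ℝ) (hV : V * Vᵀ = 1) :
    norm12 (β * V) = norm12 β :=
  Finset.sum_congr rfl fun p _ => rowNorm_mul_orth β V hV p

theorem minimizer_rotated {D P : ℕ}
    (X : Matrix (Fin D) (Fin P) ℝ)
    (U : Matrix (Fin D) (Fin D) ℝ) (hU : Uᵀ * U = 1)
    (βstar : Matrix (Fin P) (Fin D) ℝ)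
    (hfeas : (1 : Matrix (Fin D) (Fin D) ℝ) = X * βstar)
    (hmin : ∀ β : Matrix (Fin P) (Fin D) ℝ,
      (1 : Matrix (Fin D) (Fin D) ℝ) = X * β → norm12 βstar ≤ norm12 β) :
    ((1 : Matrix (Fin D) (Fin D) ℝ) = (U * X) * (βstar * U⁻¹) ∧
      ∀ β : Matrix (Fin P) (Fin D) ℝ,
        (1 : Matrix (Fin D) (Fin D) ℝ) = (U * X) * β → norm12 (βstar * U⁻¹) ≤ norm12 β) ∧
    support (βstar * U⁻¹) = support βstar := by
  have hU' : U * Uᵀ = 1 := mul_eq_one_comm.mp hU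
  have hinv : U⁻¹ = Uᵀ := Matrix.inv_eq_right_inv hU'
  have hrow : ∀ p, rowNorm (βstar * U⁻¹) p = rowNorm βstar p := by
    intro p
    rw [hinv]
    exact rowNorm_mul_orth βstar Uᵀ (by rwa [Matrix.transpose_transpose]) p
  have hnorm : norm12 (βstar * U⁻¹) = norm12 βstar :=
    Finset.sum_congr rfl fun p _ => hrow p
  refine ⟨⟨?_, ?_⟩, ?_⟩
  · rw [hinv]
    calc (1 : Matrix (Fin D) (Fin D) ℝ) = U * Uᵀ := hU'.symm
      _ = U * 1 * Uᵀ := by rw [Matrix.mul_one]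
      _ = U * (X * βstar) * Uᵀ := by rw [← hfeas]
      _ = U * X * (βstar * Uᵀ) := by simp only [Matrix.mul_assoc]
  · intro β hβ
    have h2 : (1 : Matrix (Fin D) (Fin D) ℝ) = X * (β * U) := by
      calc (1 : Matrix (Fin D) (Fin D) ℝ) = Uᵀ * U := hU.symm
        _ = Uᵀ * (1 * U) := by rw [Matrix.one_mul]
        _ = Uᵀ * ((U * X * β) * U) := by rw [← hβ]
        _ = X * (β * U) := by
            simp only [← Matrix.mul_assoc]
            rw [hU, Matrix.one_mul, Matrix.mul_assoc]
    have := hmin (β * U) h2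
    rw [hnorm]
    calc norm12 βstar ≤ norm12 (β * U) := this
      _ = norm12 β := norm12_mul_orth β U hU'
  · ext p
    simp only [support, Set.mem_setOf_eq, hrow]
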